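/- Correctness of the ite-rule for dependent variables: suppose θ(a) = g where g is a symbolic expression all of whose symbols 𝔟 satisfy that θ_*[κ](b) has already been correctly defined (θ_*[κ](b) ≡ θ^κ(b) for all κ ≥ 0). If one defines θ_*[κ](a) = ite(κ > 0, θ_*[κ−1]⟨g⟩, 𝔞), then θ_*[κ](a) ≡ θ^κ(a) for all κ ≥ 0. -/
import Mathlib

/-- Correctness of the ite-rule for dependent variables: if `θ(a) = g`, where
`g` depends only on variables in `S` and `θ_*[κ]` agrees with `θ^κ` on all
variables of `S`, and `θ_*[κ](a) = ite(κ > 0, θ_*[κ−1]⟨g⟩, 𝔞)`, then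
`θ_*[κ](a) ≡ θ^κ(a)` for all `κ ≥ 0`. -/
theorem ite_rule_correct {Var : Type} (θ : (Var → ℤ) → (Var → ℤ)) (a : Var)
    (S : Set Var) (g : (Var → ℤ) → ℤ)
    (hg : ∀ v w : Var → ℤ, (∀ b ∈ S, v b = w b) → g v = g w)
    (ha : ∀ v, θ v a = g v)
    (θstar : ℕ → (Var → ℤ) → (Var → ℤ))
    (hb : ∀ b ∈ S, ∀ (κ : ℕ) (v : Var → ℤ), θstar κ v b = (θ^[κ]) v b)
    (hdef : ∀ (κ : ℕ) (v : Var → ℤ),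
      θstar κ v a = if 0 < κ then g (θstar (κ - 1) v) else v a) :
    ∀ (κ : ℕ) (v : Var → ℤ), θstar κ v a = (θ^[κ]) v a := by
  intro κ v
  cases κ with
  | zero => simp [hdef]
  | succ n =>
    rw [hdef, if_pos (Nat.succ_pos n), Function.iterate_succ_apply', ha]
    exact hg _ _ fun b hbS => by simpa using hb b hbS n v
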